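/- For a bordered kernel matrix K_{t+1} = [[K_t, k̄],[k̄^T, k]] with K_t = Φ^T Φ, k̄ = Φ^T φ, k = φ^T φ, and γ > 0, the effective dimension satisfies d_eff(γ)_{t+1} = d_eff(γ)_t + Δ, where Δ = (k - k̄^T (K_t + γI)^{-1} k̄ - γ k̄^T (K_t + γI)^{-2} k̄)/ξ, with ξ = k + γ - k̄^T (K_t + γI)^{-1} k̄. -/

import Mathlib

open Matrix

lemma my_trace_fromBlocks {m n : Type*} [Fintype m] [Fintype n]
    (A : Matrix m m ℝ) (B : Matrix m n ℝ) (C : Matrix n m ℝ) (D : Matrix n n ℝ) :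
    Matrix.trace (Matrix.fromBlocks A B C D) = Matrix.trace A + Matrix.trace D := by
  simp [Matrix.trace, Matrix.diag, Fintype.sum_sum_type, Matrix.fromBlocks]

lemma my_rowcol {n : Type*} [Fintype n] (v : n → ℝ) (M : Matrix n n ℝ) :
    (Matrix.of fun (_ : Unit) j => v j) * M * (Matrix.of fun i (_ : Unit) => v i) =
      Matrix.of fun (_ : Unit) (_ : Unit) => v ⬝ᵥ (M *ᵥ v) := by
  ext _ _
  simp only [Matrix.mul_apply, Matrix.of_apply, dotProduct, Matrix.mulVec,
    Finset.sum_mul, Finset.mul_sum]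
  rw [Finset.sum_comm]
  exact Finset.sum_congr rfl fun i _ => Finset.sum_congr rfl fun j _ => by ring

/-- Effective dimension update under bordering: d_eff(γ)_{t+1} = d_eff(γ)_t + Δ. -/
theorem deff_increment {D t : ℕ} (Φ : Matrix (Fin D) (Fin t) ℝ)
    (φ : Fin D → ℝ) (γ : ℝ) (hγ : 0 < γ) :
    let K : Matrix (Fin t) (Fin t) ℝ := Φᵀ * Φ
    let kb : Fin t → ℝ := Φᵀ *ᵥ φ
    let k : ℝ := φ ⬝ᵥ φ
    let K' : Matrix (Fin t ⊕ Unit) (Fin t ⊕ Unit) ℝ :=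
      Matrix.fromBlocks K (Matrix.of fun i _ => kb i) (Matrix.of fun _ j => kb j)
        (Matrix.of fun _ _ => k)
    let ξ : ℝ := k + γ - kb ⬝ᵥ ((K + γ • 1)⁻¹ *ᵥ kb)
    let Δ : ℝ := (k - kb ⬝ᵥ ((K + γ • 1)⁻¹ *ᵥ kb)
        - γ * (kb ⬝ᵥ (((K + γ • 1)⁻¹ ^ 2) *ᵥ kb))) / ξ
    Matrix.trace (K' * (K' + γ • 1)⁻¹) = Matrix.trace (K * (K + γ • 1)⁻¹) + Δ := by
  intro K kb k K' ξ Δ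
  -- positive definiteness facts
  have hγ1 : ∀ {m : Type} [Fintype m] [DecidableEq m],
      (γ • (1 : Matrix m m ℝ)).PosDef := by
    intro m _ _
    rw [smul_one_eq_diagonal]
    exact Matrix.PosDef.diagonal (fun _ => hγ)
  have hK : K.PosSemidef := by
    have := posSemidef_conjTranspose_mul_self Φ
    simpa [Matrix.conjTranspose_eq_transpose_of_trivial] using this
  have hK' : K'.PosSemidef := by
    set G : Matrix (Fin D) (Fin t ⊕ Unit) ℝ :=
      Matrix.of fun i j => Sum.elim (fun j' => Φ i j') (fun _ => φ i) j with hG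
    have h := posSemidef_conjTranspose_mul_self G
    have hGK : Gᴴ * G = K' := by
      ext i j
      cases i <;> cases j <;>
        simp [hG, K', K, kb, k, Matrix.mul_apply, Matrix.fromBlocks, Matrix.mulVec,
          dotProduct, Matrix.conjTranspose_apply, mul_comm]
    rwa [hGK] at h
  have hA : (K + γ • 1).PosDef := Matrix.PosDef.posSemidef_add hK hγ1
  set A := K + γ • (1 : Matrix (Fin t) (Fin t) ℝ) with hAdef
  letI : Invertible A := hA.isUnit.invertible
  -- block decomposition of K' + γ • 1
  set Bc : Matrix (Fin t) Unit ℝ := Matrix.of fun i _ => kb i with hBc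
  set Br : Matrix Unit (Fin t) ℝ := Matrix.of fun _ j => kb j with hBr
  set Dm : Matrix Unit Unit ℝ := Matrix.of fun _ _ => k + γ with hDm
  have hsum : K' + γ • 1 = Matrix.fromBlocks A Bc Br Dm := by
    ext i j
    cases i <;> cases j <;>
      simp [K', Matrix.fromBlocks, Matrix.one_apply, hAdef, Matrix.add_apply,
        Matrix.smul_apply, hBc, hBr, hDm]
  -- the Schur complement
  have hiA : ⅟A = A⁻¹ := invOf_eq_nonsing_inv A
  set S : Matrix Unit Unit ℝ := Dm - Br * ⅟A * Bc with hSdef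
  have hS : S = Matrix.of fun _ _ => ξ := by
    rw [hSdef, hiA, hBr, hBc, my_rowcol]
    ext _ _
    simp [hDm, ξ, hAdef]
  -- ξ is positive
  have hB' : (K' + γ • 1).PosDef := Matrix.PosDef.posSemidef_add hK' hγ1
  have hξ : 0 < ξ := by
    have hdet := hB'.det_pos
    rw [hsum, Matrix.det_fromBlocks₁₁] at hdet
    have hdetS : Matrix.det S = ξ := by rw [hS]; simp [Matrix.det_unique]
    rw [← hSdef, hdetS] at hdet
    nlinarith [hA.det_pos]
  letI : Invertible S := S.invertibleOfIsUnitDet (by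
    rw [hS]; simpa [Matrix.det_unique] using hξ.ne')
  have hinvS : ⅟S = Matrix.of fun _ _ => ξ⁻¹ := by
    apply invOf_eq_right_inv
    ext _ _
    rw [hS]
    simp [Matrix.mul_apply]
    field_simp
  letI iB : Invertible (Matrix.fromBlocks A Bc Br Dm) :=
    Matrix.fromBlocks₁₁Invertible A Bc Br Dm
  -- trace of the big inverse
  have hinvB : (Matrix.fromBlocks A Bc Br Dm)⁻¹ =
      Matrix.fromBlocks (⅟A + ⅟A * Bc * ⅟S * Br * ⅟A) (-(⅟A * Bc * ⅟S))
        (-(⅟S * Br * ⅟A)) (⅟S) := by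
    rw [← invOf_eq_nonsing_inv]
    exact Matrix.invOf_fromBlocks₁₁_eq A Bc Br Dm
  -- trace identities
  have key : ∀ {m : Type} [Fintype m] [DecidableEq m] (M : Matrix m m ℝ),
      (M + γ • 1).PosDef →
      Matrix.trace (M * (M + γ • 1)⁻¹) =
        (Fintype.card m : ℝ) - γ * Matrix.trace ((M + γ • 1)⁻¹) := by
    intro m _ _ M hM
    have h1 : (M + γ • 1) * (M + γ • 1)⁻¹ = 1 :=
      Matrix.mul_nonsing_inv _ (isUnit_iff_ne_zero.2 hM.det_pos.ne')
    have h2 : M * (M + γ • 1)⁻¹ = 1 - γ • (M + γ • 1)⁻¹ := by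
      calc M * (M + γ • 1)⁻¹ = ((M + γ • 1) - γ • 1) * (M + γ • 1)⁻¹ := by
            rw [add_sub_cancel_right]
        _ = (M + γ • 1) * (M + γ • 1)⁻¹ - γ • ((1 : Matrix m m ℝ) * (M + γ • 1)⁻¹) := by
            rw [Matrix.sub_mul, Matrix.smul_mul]
        _ = 1 - γ • (M + γ • 1)⁻¹ := by rw [h1, Matrix.one_mul]
    rw [h2, Matrix.trace_sub, Matrix.trace_smul, Matrix.trace_one, smul_eq_mul]
  -- trace of the bordered inverse
  have hmid : Matrix.trace (⅟A * Bc * ⅟S * Br * ⅟A) =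
      ξ⁻¹ * (kb ⬝ᵥ ((A⁻¹ * A⁻¹) *ᵥ kb)) := by
    rw [Matrix.mul_assoc (⅟A * Bc * ⅟S) Br ⅟A, Matrix.trace_mul_comm]
    have h5 : (Br * ⅟A) * (⅟A * Bc * ⅟S) = (Br * (A⁻¹ * A⁻¹) * Bc) * ⅟S := by
      rw [hiA]; simp only [Matrix.mul_assoc]
    rw [h5, hBr, hBc, my_rowcol, hinvS]
    simp [Matrix.trace, Matrix.mul_apply]
    ring
  have htr : Matrix.trace ((K' + γ • 1)⁻¹) =
      Matrix.trace A⁻¹ + (ξ⁻¹ * (kb ⬝ᵥ ((A⁻¹ * A⁻¹) *ᵥ kb)) + ξ⁻¹) := by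
    rw [hsum, hinvB, my_trace_fromBlocks, Matrix.trace_add, hmid]
    have h6 : Matrix.trace (⅟S) = ξ⁻¹ := by rw [hinvS]; simp [Matrix.trace]
    rw [h6, hiA]
    ring
  -- assemble
  have hL := key K' (Matrix.PosDef.posSemidef_add hK' hγ1)
  have hR := key K hA
  rw [← hAdef] at hR
  rw [hL, hR, htr]
  have hΔ : Δ = (k - kb ⬝ᵥ (A⁻¹ *ᵥ kb) - γ * (kb ⬝ᵥ ((A⁻¹ * A⁻¹) *ᵥ kb))) / ξ := by
    show (k - kb ⬝ᵥ (A⁻¹ *ᵥ kb) - γ * (kb ⬝ᵥ ((A⁻¹ ^ 2) *ᵥ kb))) / ξ = _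
    rw [pow_two]
  have hξdef : ξ = k + γ - kb ⬝ᵥ (A⁻¹ *ᵥ kb) := rfl
  rw [hΔ]
  simp only [Fintype.card_sum, Fintype.card_fin, Fintype.card_unit]
  push_cast
  rw [show ξ = k + γ - kb ⬝ᵥ (A⁻¹ *ᵥ kb) from hξdef]
  have hne' : k + γ - kb ⬝ᵥ (A⁻¹ *ᵥ kb) ≠ 0 := hξ.ne'
  set x := kb ⬝ᵥ (A⁻¹ *ᵥ kb) with hx
  set y := kb ⬝ᵥ ((A⁻¹ * A⁻¹) *ᵥ kb) with hy
  set r := Matrix.trace A⁻¹ with hr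
  field_simp
  ring
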